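/- arXiv:math/0408320 — 2 statements merged into one kernel-verified Lean document; each statement's English description precedes it below -/
import Mathlib

section
/- Suppose the characteristic polynomial has n distinct nonzero roots α_1, ..., α_n. Then for every h ≥ 0, u_h equals (−1)^{n+1} times the quotient of two determinants: the numerator is the determinant of the (n+1)×(n+1) matrix whose first column is (u_0, u_1, ..., u_{n−1}, 0)^t and whose remaining columns are (1, α_i, α_i^2, ..., α_i^{n−1}, α_i^h)^t for i = 1, ..., n, and the denominator is the Vandermonde product Π_{1≤i<j≤n} (α_j − α_i). -/
open Matrix

open Finset in
lemma aux_prod_pairs {n : ℕ} (f : Fin n → Fin n → ℂ) :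
    ∏ p ∈ Finset.univ.filter (fun p : Fin n × Fin n => p.1 < p.2), f p.1 p.2
      = ∏ i : Fin n, ∏ j ∈ Finset.Ioi i, f i j := by
  rw [← Finset.univ_product_univ, Finset.prod_filter, Finset.prod_product]
  refine Finset.prod_congr rfl fun i _ => ?_
  rw [← Finset.prod_filter]
  congr 1
  ext j
  simp


lemma aux_seq {n : ℕ} (s : Fin n → ℂ) (α : Fin n → ℂ) (hinj : Function.Injective α)
    (hfac : ∀ X : ℂ, X ^ n - ∑ i : Fin n, s i * X ^ (n - (i.val + 1)) =
      ∏ i : Fin n, (X - α i))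
    (u : ℕ → ℂ) (hu : ∀ h : ℕ, u (h + n) = ∑ i : Fin n, s i * u (h + n - (i.val + 1))) :
    ∃ c : Fin n → ℂ, ∀ m : ℕ, u m = ∑ i : Fin n, c i * α i ^ m := by
  set W : Matrix (Fin n) (Fin n) ℂ := (Matrix.vandermonde α)ᵀ with hW
  have hdet : W.det ≠ 0 := by
    rw [Matrix.det_transpose, Matrix.det_vandermonde_ne_zero_iff]
    exact hinj
  set c : Fin n → ℂ := W⁻¹.mulVec (fun r => u r) with hc
  have hWc : ∀ r : Fin n, ∑ i : Fin n, α i ^ (r : ℕ) * c i = u r := by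
    intro r
    have : W.mulVec c = fun r : Fin n => u r := by
      rw [hc, Matrix.mulVec_mulVec, Matrix.mul_nonsing_inv W (isUnit_iff_ne_zero.mpr hdet),
        Matrix.one_mulVec]
    have := congrFun this r
    simpa [Matrix.mulVec, dotProduct, hW, Matrix.vandermonde] using this
  have hαrec : ∀ i : Fin n, α i ^ n = ∑ j : Fin n, s j * α i ^ (n - (j.val + 1)) := by
    intro i
    have := hfac (α i)
    rw [Finset.prod_eq_zero (Finset.mem_univ i) (sub_self (α i))] at this
    linear_combination this
  refine ⟨c, ?_⟩
  intro m
  induction m using Nat.strong_induction_on with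
  | _ m ih =>
    rcases lt_or_ge m n with hm | hm
    · have := hWc ⟨m, hm⟩
      simp only [Fin.val_mk] at this
      rw [← this]
      exact Finset.sum_congr rfl fun i _ => (mul_comm _ _)
    · obtain ⟨k, rfl⟩ : ∃ k, m = k + n := ⟨m - n, (Nat.sub_add_cancel hm).symm⟩
      have key : ∀ j : Fin n, u (k + n - (j.val + 1))
          = ∑ i : Fin n, c i * α i ^ k * α i ^ (n - (j.val + 1)) := by
        intro j
        have hidx : k + n - (j.val + 1) = k + (n - (j.val + 1)) := by omega
        rw [hidx, ih (k + (n - (j.val + 1))) (by omega)]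
        refine Finset.sum_congr rfl fun i _ => ?_
        rw [pow_add, mul_assoc]
      calc u (k + n) = ∑ j : Fin n, s j * u (k + n - (j.val + 1)) := hu k
        _ = ∑ j : Fin n, ∑ i : Fin n, s j * (c i * α i ^ k * α i ^ (n - (j.val + 1))) := by
            refine Finset.sum_congr rfl fun j _ => ?_
            rw [key j, Finset.mul_sum]
        _ = ∑ i : Fin n, ∑ j : Fin n, s j * (c i * α i ^ k * α i ^ (n - (j.val + 1))) :=
            Finset.sum_comm
        _ = ∑ i : Fin n, c i * α i ^ (k + n) := by
            refine Finset.sum_congr rfl fun i _ => ?_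
            have : ∑ j : Fin n, s j * (c i * α i ^ k * α i ^ (n - (j.val + 1)))
                = c i * α i ^ k * ∑ j : Fin n, s j * α i ^ (n - (j.val + 1)) := by
              rw [Finset.mul_sum]
              exact Finset.sum_congr rfl fun j _ => by ring
            rw [this, ← hαrec i, pow_add, mul_assoc]


lemma aux_det {n : ℕ} (α : Fin n → ℂ) (u : ℕ → ℂ) (co : Fin n → ℂ)
    (hc : ∀ m : ℕ, u m = ∑ i : Fin n, co i * α i ^ m) (h : ℕ) :
    (Matrix.of fun r c : Fin (n + 1) =>
      Fin.cases
        (Fin.lastCases (0 : ℂ) (fun r' : Fin n => u r'.val) r)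
        (fun i : Fin n =>
          Fin.lastCases (α i ^ h) (fun r' : Fin n => α i ^ r'.val) r)
        c).det
    = (-1 : ℂ) ^ (n + 1) * u h * ∏ i : Fin n, ∏ j ∈ Finset.Ioi i, (α j - α i) := by
  set M : Matrix (Fin (n + 1)) (Fin (n + 1)) ℂ := Matrix.of fun r c : Fin (n + 1) =>
      Fin.cases
        (Fin.lastCases (0 : ℂ) (fun r' : Fin n => u r'.val) r)
        (fun i : Fin n =>
          Fin.lastCases (α i ^ h) (fun r' : Fin n => α i ^ r'.val) r)
        c with hM
  set N : Matrix (Fin (n + 1)) (Fin (n + 1)) ℂ := Mᵀ with hN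
  set δ : Fin (n + 1) → ℂ := fun r => if r = Fin.last n then 1 else 0 with hδ
  set c' : Fin (n + 1) → ℂ := Fin.cases 0 co with hc'
  have hrow : N 0 = (∑ k : Fin (n + 1), c' k • N k) + (-(u h)) • δ := by
    funext r
    induction r using Fin.lastCases with
    | last =>
      simp only [Pi.add_apply, Pi.smul_apply, Finset.sum_apply, hδ, if_pos rfl,
        smul_eq_mul, mul_one]
      rw [Fin.sum_univ_succ]
      simp only [hc', Fin.cases_zero, Fin.cases_succ, zero_smul, zero_add, smul_eq_mul]
      have : ∀ k : Fin n, N (Fin.succ k) (Fin.last n) = α k ^ h := by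
        intro k
        simp [hN, hM, Matrix.transpose_apply]
      simp only [this]
      have h0 : N 0 (Fin.last n) = 0 := by simp [hN, hM, Matrix.transpose_apply]
      rw [h0, hc h]
      simp
    | cast r' =>
      simp only [Pi.add_apply, Pi.smul_apply, Finset.sum_apply, hδ,
        if_neg (Fin.castSucc_lt_last r').ne, smul_eq_mul, mul_zero, add_zero]
      rw [Fin.sum_univ_succ]
      simp only [hc', Fin.cases_zero, Fin.cases_succ, zero_smul, zero_add, smul_eq_mul]
      have : ∀ k : Fin n, N (Fin.succ k) (Fin.castSucc r') = α k ^ (r' : ℕ) := by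
        intro k
        simp [hN, hM, Matrix.transpose_apply]
      simp only [this]
      have h0 : N 0 (Fin.castSucc r') = u r' := by simp [hN, hM, Matrix.transpose_apply]
      rw [h0, hc r']
      ring
  have hDsub : (N.updateRow 0 δ).submatrix Fin.succ (Fin.last n).succAbove
      = Matrix.vandermonde α := by
    ext i r'
    rw [Fin.succAbove_last]
    simp [Matrix.updateRow_ne (Fin.succ_ne_zero i), hN, hM, Matrix.vandermonde]
  have hDdet : (N.updateRow 0 δ).det
      = (-1 : ℂ) ^ n * ∏ i : Fin n, ∏ j ∈ Finset.Ioi i, (α j - α i) := by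
    rw [Matrix.det_succ_row_zero]
    rw [Finset.sum_eq_single (Fin.last n)]
    · rw [hDsub, Matrix.det_vandermonde]
      simp [δ]
    · intro j _ hj
      have : (N.updateRow 0 δ) 0 j = 0 := by
        rw [Matrix.updateRow_self]
        simp [hδ, hj]
      rw [this]; ring
    · intro hmem; exact absurd (Finset.mem_univ _) hmem
  calc M.det = N.det := (Matrix.det_transpose M).symm
    _ = (N.updateRow 0 (N 0)).det := by rw [Matrix.updateRow_eq_self]
    _ = (N.updateRow 0 ((∑ k : Fin (n + 1), c' k • N k) + (-(u h)) • δ)).det := by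
        rw [← hrow]
    _ = (N.updateRow 0 (∑ k : Fin (n + 1), c' k • N k)).det
        + (N.updateRow 0 ((-(u h)) • δ)).det := Matrix.det_updateRow_add _ _ _ _
    _ = c' 0 • N.det + (-(u h)) * (N.updateRow 0 δ).det := by
        rw [Matrix.det_updateRow_sum, Matrix.det_updateRow_smul, smul_eq_mul]
    _ = (-1 : ℂ) ^ (n + 1) * u h * ∏ i : Fin n, ∏ j ∈ Finset.Ioi i, (α j - α i) := by
        rw [hDdet]
        simp only [hc', Fin.cases_zero, zero_smul, zero_add]
        rw [pow_succ]
        ring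



/-- `u` satisfies the linear recurrence `u_{h+n} = Σ_{i=1}^n s_i u_{h+n-i}`. -/
def IsRecSeq (n : ℕ) (s : Fin n → ℂ) (u : ℕ → ℂ) : Prop :=
  ∀ h : ℕ, u (h + n) = ∑ i : Fin n, s i * u (h + n - (i.val + 1))

theorem stmt7 (n : ℕ) (hn : 1 ≤ n) (s : Fin n → ℂ)
    (hs : s ⟨n - 1, Nat.sub_lt hn one_pos⟩ ≠ 0)
    (α : Fin n → ℂ) (hinj : Function.Injective α)
    (hfac : ∀ X : ℂ, X ^ n - ∑ i : Fin n, s i * X ^ (n - (i.val + 1)) =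
      ∏ i : Fin n, (X - α i))
    (u : ℕ → ℂ) (hu : IsRecSeq n s u) (h : ℕ) :
    u h = (-1 : ℂ) ^ (n + 1) *
      (∏ p ∈ Finset.univ.filter (fun p : Fin n × Fin n => p.1 < p.2),
        (α p.2 - α p.1))⁻¹ *
      (Matrix.of fun r c : Fin (n + 1) =>
        Fin.cases
          (Fin.lastCases (0 : ℂ) (fun r' : Fin n => u r'.val) r)
          (fun i : Fin n =>
            Fin.lastCases (α i ^ h) (fun r' : Fin n => α i ^ r'.val) r)
          c).det := by
  obtain ⟨co, hco⟩ := aux_seq s α hinj hfac u hu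
  rw [aux_prod_pairs (fun i j => α j - α i), aux_det α u co hco h]
  set V := ∏ i : Fin n, ∏ j ∈ Finset.Ioi i, (α j - α i) with hVdef
  have hV : V ≠ 0 := by
    rw [hVdef]
    refine Finset.prod_ne_zero_iff.mpr fun i _ => Finset.prod_ne_zero_iff.mpr fun j hj => ?_
    exact sub_ne_zero.mpr fun hEq => (Finset.mem_Ioi.mp hj).ne' (hinj hEq)
  have hsq : ((-1 : ℂ)) ^ (n + 1) * (-1) ^ (n + 1) = 1 := by
    rw [← pow_add]; exact Even.neg_one_pow ⟨n + 1, by ring⟩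
  have : (-1 : ℂ) ^ (n + 1) * V⁻¹ * ((-1) ^ (n + 1) * u h * V)
      = ((-1) ^ (n + 1) * (-1) ^ (n + 1)) * (V⁻¹ * V) * u h := by ring
  rw [this, hsq, inv_mul_cancel₀ hV]
  ring
end

section
/- Suppose the characteristic polynomial has n distinct nonzero roots α_1, ..., α_n, and let k_0 < k_1 < ⋯ < k_{n−1} be nonnegative integers such that the n×n matrix M = (α_i^{k_j}) is invertible. Then for every h ≥ 0, u_h = (−1)^{n+1} det(M)^{−1} det(N), where N is the (n+1)×(n+1) matrix whose first column is (u_{k_0}, ..., u_{k_{n−1}}, 0)^t and whose remaining columns are (α_i^{k_0}, ..., α_i^{k_{n−1}}, α_i^h)^t for i = 1, ..., n. -/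
theorem stmt8 (n : ℕ) (hn : 1 ≤ n) (s : Fin n → ℂ)
    (hs : s ⟨n - 1, Nat.sub_lt hn one_pos⟩ ≠ 0)
    (α : Fin n → ℂ) (hinj : Function.Injective α)
    (hfac : ∀ X : ℂ, X ^ n - ∑ i : Fin n, s i * X ^ (n - (i.val + 1)) =
      ∏ i : Fin n, (X - α i))
    (u : ℕ → ℂ) (hu : IsRecSeq n s u)
    (k : Fin n → ℕ) (hk : StrictMono k)
    (M : Matrix (Fin n) (Fin n) ℂ) (hM : M = Matrix.of fun r c : Fin n => α c ^ k r)
    (hMdet : M.det ≠ 0) (h : ℕ) :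
    u h = (-1 : ℂ) ^ (n + 1) * M.det⁻¹ *
      (Matrix.of fun r c : Fin (n + 1) =>
        Fin.cases
          (Fin.lastCases (0 : ℂ) (fun r' : Fin n => u (k r')) r)
          (fun i : Fin n =>
            Fin.lastCases (α i ^ h) (fun r' : Fin n => α i ^ k r') r)
          c).det := by
  -- roots satisfy the recurrence relation
  have hroot : ∀ j : Fin n, α j ^ n = ∑ i : Fin n, s i * α j ^ (n - (i.val + 1)) := by
    intro j
    have h0 := hfac (α j)
    rw [Finset.prod_eq_zero (Finset.mem_univ j) (by simp)] at h0
    exact sub_eq_zero.mp h0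
  -- Vandermonde matrix is invertible
  set V : Matrix (Fin n) (Fin n) ℂ := (Matrix.vandermonde α).transpose with hV
  have hVdet : V.det ≠ 0 := by
    rw [hV, Matrix.det_transpose]
    exact Matrix.det_vandermonde_ne_zero_iff.mpr hinj
  set c : Fin n → ℂ := V⁻¹.mulVec (fun m => u m.val) with hc
  have hVc : V.mulVec c = fun m => u m.val := by
    rw [hc, Matrix.mulVec_mulVec, Matrix.mul_nonsing_inv V (isUnit_iff_ne_zero.mpr hVdet),
      Matrix.one_mulVec]
  -- Binet formula
  have hbin : ∀ m : ℕ, u m = ∑ i : Fin n, c i * α i ^ m := by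
    intro m
    induction m using Nat.strong_induction_on with
    | _ m ih =>
      rcases lt_or_ge m n with hm | hm
      · have := congrFun hVc ⟨m, hm⟩
        simp only [Matrix.mulVec, dotProduct, hV, Matrix.transpose_apply,
          Matrix.vandermonde] at this
        rw [← this]
        exact Finset.sum_congr rfl fun i _ => by rw [mul_comm]; rfl
      · obtain ⟨m', rfl⟩ : ∃ m', m = m' + n := ⟨m - n, (Nat.sub_add_cancel hm).symm⟩
        rw [hu m']
        have key : ∀ i : Fin n, m' + n - (i.val + 1) = m' + (n - (i.val + 1)) :=
          fun i => Nat.add_sub_assoc i.isLt m'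
        have hlt : ∀ i : Fin n, m' + (n - (i.val + 1)) < m' + n := fun i =>
          Nat.add_lt_add_left (Nat.sub_lt (lt_of_lt_of_le one_pos hn)
            (Nat.succ_pos _)) m'
        calc ∑ i : Fin n, s i * u (m' + n - (i.val + 1))
            = ∑ i : Fin n, s i * ∑ j : Fin n, c j * α j ^ (m' + (n - (i.val + 1))) := by
              refine Finset.sum_congr rfl fun i _ => ?_
              rw [key i, ih _ (hlt i)]
          _ = ∑ i : Fin n, ∑ j : Fin n, s i * (c j * α j ^ (m' + (n - (i.val + 1)))) := by
              simp [Finset.mul_sum]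
          _ = ∑ j : Fin n, ∑ i : Fin n, s i * (c j * α j ^ (m' + (n - (i.val + 1)))) :=
              Finset.sum_comm
          _ = ∑ j : Fin n, c j * (α j ^ m' * ∑ i : Fin n, s i * α j ^ (n - (i.val + 1))) := by
              refine Finset.sum_congr rfl fun j _ => ?_
              simp only [Finset.mul_sum]
              refine Finset.sum_congr rfl fun i _ => ?_
              rw [pow_add]; ring
          _ = ∑ j : Fin n, c j * α j ^ (m' + n) := by
              refine Finset.sum_congr rfl fun j _ => ?_
              rw [← hroot j, ← pow_add]
  -- the big matrix
  set N : Matrix (Fin (n + 1)) (Fin (n + 1)) ℂ :=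
    Matrix.of fun r c : Fin (n + 1) =>
      Fin.cases
        (Fin.lastCases (0 : ℂ) (fun r' : Fin n => u (k r')) r)
        (fun i : Fin n =>
          Fin.lastCases (α i ^ h) (fun r' : Fin n => α i ^ k r') r)
        c with hN
  -- the auxiliary vector
  set w : Fin (n + 1) → ℂ := fun r => if r = Fin.last n then -(u h) else 0 with hw
  have hcol : N = N.updateCol 0 ((fun r => ∑ i : Fin n, c i • N r i.succ) + w) := by
    ext r j
    rcases Fin.eq_zero_or_eq_succ j with rfl | ⟨i, rfl⟩
    · rw [Matrix.updateCol_self]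
      induction r using Fin.lastCases with
      | last =>
        simp only [Pi.add_apply, hN, hw, Matrix.of_apply, Fin.cases_zero, Fin.cases_succ,
          Fin.lastCases_last, if_pos rfl, smul_eq_mul]
        rw [← hbin h]; simp
      | cast r' =>
        simp only [Pi.add_apply, hN, hw, Matrix.of_apply, Fin.cases_zero, Fin.cases_succ,
          Fin.lastCases_castSucc, if_neg (Fin.castSucc_lt_last r').ne, smul_eq_mul]
        rw [hbin (k r')]; ring
    · rw [Matrix.updateCol_ne (Fin.succ_ne_zero i)]
  have hdetN : N.det = (-1 : ℂ) ^ (n + 1) * u h * M.det := by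
    conv_lhs => rw [hcol]
    rw [Matrix.det_updateCol_add]
    have h1 : (N.updateCol 0 fun r => ∑ i : Fin n, c i • N r i.succ).det = 0 := by
      have := Matrix.det_updateCol_sum N (0 : Fin (n+1))
        (fun j : Fin (n+1) => Fin.cases 0 c j)
      simp only [Fin.cases_zero, zero_smul] at this
      rw [show (fun r => ∑ i : Fin n, c i • N r i.succ)
          = fun r => ∑ i : Fin (n+1), (Fin.cases 0 c i : ℂ) • N r i from ?_]
      · rw [this]
      · funext r
        rw [Fin.sum_univ_succ]
        simp only [Fin.cases_zero, zero_smul, zero_add, Fin.cases_succ]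
    rw [h1, zero_add]
    -- expand along column 0
    rw [Matrix.det_succ_column_zero]
    rw [Finset.sum_eq_single (Fin.last n)]
    · have hentry : (N.updateCol 0 w) (Fin.last n) 0 = -(u h) := by
        simp [Matrix.updateCol_apply, hw]
      rw [hentry]
      have hsub : ((N.updateCol 0 w).submatrix (Fin.last n).succAbove Fin.succ) = M := by
        ext r j
        simp only [Matrix.submatrix_apply, Fin.succAbove_last]
        rw [Matrix.updateCol_apply, if_neg (Fin.succ_ne_zero j)]
        simp [hN, hM]
      rw [hsub]
      simp only [Fin.val_last]
      rw [pow_succ]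
      ring
    · intro b _ hb
      have : (N.updateCol 0 w) b 0 = 0 := by
        rw [Matrix.updateCol_apply, if_pos rfl, hw]
        simp [hb]
      rw [this]; ring
    · intro habs; exact absurd (Finset.mem_univ _) habs
  rw [hdetN]
  have ht : ((-1 : ℂ) ^ (n + 1)) * ((-1 : ℂ) ^ (n + 1)) = 1 := by
    rw [← pow_add, show n + 1 + (n + 1) = 2 * (n + 1) by ring, pow_mul]
    norm_num
  rw [show (-1 : ℂ) ^ (n+1) * M.det⁻¹ * ((-1 : ℂ) ^ (n+1) * u h * M.det)
      = ((-1 : ℂ) ^ (n+1) * (-1 : ℂ) ^ (n+1)) * (M.det⁻¹ * M.det) * u h from by ring,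
    ht, inv_mul_cancel₀ hMdet, one_mul, one_mul]
end
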